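/- Let X be a Polish space, μ a Borel probability measure on X, {𝒮_n} a decreasing sequence of sub-σ-algebras of the Borel σ-algebra with 𝒮 = ⋂_n 𝒮_n. Let μ = ∫ μ_{n,x} dμ(x) and μ = ∫ μ_{∞,x} dμ(x) be the disintegrations of μ relative to 𝒮_n and 𝒮 respectively. Then for μ-a.e. x ∈ X, the inequality liminf_{n→∞} μ_{n,x}(U) ≥ μ_{∞,x}(U) holds simultaneously for every open subset U of X. -/

import Mathlib

open MeasureTheory Filter
open scoped ENNReal Topology

/-- If a real sequence is frequently below `a` and frequently above `b`, then the reversed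
processes `j ↦ f (N - j)` have at least `k` upcrossings (from `a` to `b`) before `N - m + 1`,
for all large `N`. -/
lemma rev_upcrossingsBefore_ge {X : Type*} {f : ℕ → X → ℝ} {x : X} {a b : ℝ} (hab : a < b)
    (hfa : ∃ᶠ n in atTop, f n x < a) (hfb : ∃ᶠ n in atTop, b < f n x) (k : ℕ) :
    ∀ m, ∃ M, m ≤ M ∧ ∀ N, M ≤ N →
      k ≤ upcrossingsBefore a b (fun j => f (N - j)) (N - m + 1) x := by
  induction k with
  | zero => exact fun m => ⟨m, le_rfl, fun N _ => Nat.zero_le _⟩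
  | succ k ih =>
    intro m
    obtain ⟨s, hs, hsb⟩ := (frequently_atTop.1 hfb) m
    obtain ⟨t, ht, hta⟩ := (frequently_atTop.1 hfa) (s + 1)
    obtain ⟨M, hM, hMk⟩ := ih (t + 1)
    refine ⟨M, le_trans (le_trans hs (le_trans (Nat.le_of_succ_le ht) (Nat.le_succ t))) hM,
      fun N hN => ?_⟩
    have htN : t + 1 ≤ N := le_trans hM hN
    have h1 : k ≤ upcrossingsBefore a b (fun j => f (N - j)) (N - t) x := by
      have := hMk N hN
      have he : N - (t + 1) + 1 = N - t := by omega
      rwa [he] at this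
    have hlt : upcrossingsBefore a b (fun j => f (N - j)) (N - t) x <
        upcrossingsBefore a b (fun j => f (N - j)) ((N - s) + 1) x := by
      refine upcrossingsBefore_lt_of_exists_upcrossing (N₁ := N - t) (N₂ := N - s) hab le_rfl ?_
        (by omega) ?_
      · have : N - (N - t) = t := by omega
        rw [this]; exact hta
      · have : N - (N - s) = s := by omega
        rw [this]; exact hsb
    have hmono : upcrossingsBefore a b (fun j => f (N - j)) ((N - s) + 1) x ≤
        upcrossingsBefore a b (fun j => f (N - j)) (N - m + 1) x :=
      upcrossingsBefore_mono hab (by omega) x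
    omega

/-- Reverse martingale convergence for indicators. -/
lemma tendsto_condexp_iInf {X : Type*} [mX : MeasurableSpace X]
    (μ : Measure X) [IsProbabilityMeasure μ]
    (𝒮 : ℕ → MeasurableSpace X) (hle : ∀ n, 𝒮 n ≤ mX) (hanti : Antitone 𝒮)
    {A : Set X} (hA : MeasurableSet A) :
    ∀ᵐ x ∂μ, Tendsto (fun n => (μ[Set.indicator A (fun _ => (1:ℝ))|𝒮 n]) x) atTop
      (𝓝 ((μ[Set.indicator A (fun _ => (1:ℝ))|⨅ n, 𝒮 n]) x)) := by
  set g : X → ℝ := Set.indicator A (fun _ => (1:ℝ)) with hg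
  have hg_int : Integrable g μ := (integrable_const (1:ℝ)).indicator hA
  set f : ℕ → X → ℝ := fun n => μ[g|𝒮 n] with hf
  -- a.e. bounds 0 ≤ f n ≤ 1
  have h01 : ∀ᵐ x ∂μ, ∀ n, 0 ≤ f n x ∧ f n x ≤ 1 := by
    rw [ae_all_iff]
    intro n
    have h0 : 0 ≤ᵐ[μ] f n :=
      condExp_nonneg (Eventually.of_forall fun x => Set.indicator_nonneg (fun _ _ => zero_le_one) x)
    have h1 : f n ≤ᵐ[μ] μ[(fun _ => (1:ℝ))|𝒮 n] :=
      condExp_mono hg_int (integrable_const 1)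
        (Eventually.of_forall fun x => Set.indicator_le_self' (fun _ _ => zero_le_one) x)
    have hc : μ[(fun _ => (1:ℝ))|𝒮 n] = fun _ => (1:ℝ) := condExp_const (hle n) 1
    filter_upwards [h0, h1] with x hx0 hx1
    exact ⟨hx0, by rw [hc] at hx1; exact hx1⟩
  -- reversed filtration and martingale
  have hmart : ∀ N : ℕ, Martingale (fun k => f (N - k))
      ⟨fun k => 𝒮 (N - k), fun k l hkl => hanti (Nat.sub_le_sub_left hkl N), fun k => hle _⟩ μ := by
    intro N
    constructor
    · exact fun k => stronglyMeasurable_condExp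
    · intro i j hij
      exact condExp_condExp_of_le (hanti (Nat.sub_le_sub_left hij N)) (hle _)
  -- upcrossings bound
  have hupbd : ∀ a b : ℝ, a < b →
      ∀ᵐ x ∂μ, liminf (fun N => upcrossings a b (fun j => f (N - j)) x) atTop < ⊤ := by
    intro a b hab
    set C : ℝ≥0∞ := ENNReal.ofReal (1 + |a|) / ENNReal.ofReal (b - a) with hC
    have hCne : C ≠ ⊤ :=
      (ENNReal.div_lt_top ENNReal.ofReal_ne_top
        (by simp [ENNReal.ofReal_eq_zero, not_le.2 (sub_pos.2 hab)])).ne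
    have hbound : ∀ N, ∫⁻ x, upcrossings a b (fun j => f (N - j)) x ∂μ ≤ C := by
      intro N
      have h := (hmart N).submartingale.mul_lintegral_upcrossings_le_lintegral_pos_part a b
      have hRHS : (⨆ M, ∫⁻ x, ENNReal.ofReal ((f (N - M) x - a)⁺) ∂μ) ≤
          ENNReal.ofReal (1 + |a|) := by
        refine iSup_le fun M => ?_
        have : ∀ᵐ x ∂μ, ENNReal.ofReal ((f (N - M) x - a)⁺) ≤ ENNReal.ofReal (1 + |a|) := by
          filter_upwards [h01] with x hx
          refine ENNReal.ofReal_le_ofReal ?_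
          have h1 := (hx (N - M)).1
          have h2 := (hx (N - M)).2
          have : (f (N - M) x - a)⁺ ≤ max (f (N - M) x - a) 0 := le_of_eq rfl
          refine le_trans this ?_
          refine max_le ?_ (by positivity)
          have : -a ≤ |a| := neg_le_abs a
          linarith
        calc ∫⁻ x, ENNReal.ofReal ((f (N - M) x - a)⁺) ∂μ
            ≤ ∫⁻ _, ENNReal.ofReal (1 + |a|) ∂μ := lintegral_mono_ae this
          _ = ENNReal.ofReal (1 + |a|) := by simp
      rw [hC, ENNReal.le_div_iff_mul_le (Or.inl (by
            simp [ENNReal.ofReal_eq_zero, not_le.2 (sub_pos.2 hab)]))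
          (Or.inl ENNReal.ofReal_ne_top), mul_comm]
      exact le_trans h hRHS
    have hmeas : ∀ N, Measurable (fun x => upcrossings a b (fun j => f (N - j)) x) :=
      fun N => (hmart N).stronglyAdapted.measurable_upcrossings hab
    have hfatou : ∫⁻ x, liminf (fun N => upcrossings a b (fun j => f (N - j)) x) atTop ∂μ ≤ C := by
      refine le_trans (lintegral_liminf_le hmeas) ?_
      refine le_trans (liminf_le_liminf (Eventually.of_forall hbound)) ?_
      simp [liminf_const]
    exact ae_lt_top (Measurable.liminf hmeas) (by
      intro h; rw [h] at hfatou; exact hCne (top_le_iff.1 hfatou))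
  -- a.e. all rational pairs have finite liminf of reversed upcrossings
  have hrat : ∀ᵐ x ∂μ, ∀ q r : ℚ, q < r →
      liminf (fun N => upcrossings (q:ℝ) (r:ℝ) (fun j => f (N - j)) x) atTop < ⊤ := by
    simp only [ae_all_iff, eventually_imp_distrib_left]
    intro q r hqr
    exact hupbd _ _ (by exact_mod_cast hqr)
  have hconv : ∀ᵐ x ∂μ, ∃ c, Tendsto (fun n => f n x) atTop (𝓝 c) := by
    filter_upwards [h01, hrat] with x hx hxr
    refine tendsto_of_no_upcrossings Rat.denseRange_cast ?_
      (isBoundedUnder_of ⟨1, fun n => (hx n).2⟩) (isBoundedUnder_of ⟨0, fun n => (hx n).1⟩)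
    rintro _ ⟨q, rfl⟩ _ ⟨r, rfl⟩ hqr ⟨hfa, hfb⟩
    have hqr2 : q < r := by exact_mod_cast hqr
    have hklim : ∀ k : ℕ, (k : ℝ≥0∞) ≤
        liminf (fun N => upcrossings (q:ℝ) (r:ℝ) (fun j => f (N - j)) x) atTop := by
      intro k
      obtain ⟨M, -, hM⟩ := rev_upcrossingsBefore_ge hqr hfa hfb k 0
      refine le_liminf_of_le (by isBoundedDefault) ?_
      rw [eventually_atTop]
      refine ⟨M, fun N hN => ?_⟩
      refine le_iSup_of_le (N - 0 + 1) ?_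
      exact_mod_cast Nat.cast_le.2 (hM N hN)
    have htop : liminf (fun N => upcrossings (q:ℝ) (r:ℝ) (fun j => f (N - j)) x) atTop = ⊤ :=
      top_unique (ENNReal.iSup_natCast ▸ iSup_le hklim)
    exact (hxr q r hqr2).ne htop
  -- the limit function, measurable w.r.t. the tail σ-algebra
  set h' : X → ℝ≥0∞ := fun x => liminf (fun n => ENNReal.ofReal (f n x)) atTop with hh'
  have hmeas' : Measurable[⨅ n, 𝒮 n] h' := by
    intro s hs
    refine MeasurableSpace.measurableSet_iInf.2 fun m => ?_
    have hmm : Measurable[𝒮 m] h' := by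
      have hrw : h' = fun x => liminf (fun n => ENNReal.ofReal (f (n + m) x)) atTop := by
        funext x; exact (liminf_nat_add (fun n => ENNReal.ofReal (f n x)) m).symm
      rw [hrw]
      refine Measurable.liminf fun n => ?_
      exact ENNReal.measurable_ofReal.comp
        ((stronglyMeasurable_condExp.measurable).mono (hanti (Nat.le_add_left m n)) le_rfl)
    exact hmm hs
  set h : X → ℝ := fun x => (h' x).toReal with hhdef
  have hmeash : Measurable[⨅ n, 𝒮 n] h := ENNReal.measurable_toReal.comp hmeas'
  have hinfle : (⨅ n, 𝒮 n) ≤ mX := iInf_le_of_le 0 (hle 0)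
  have hTend : ∀ᵐ x ∂μ, Tendsto (fun n => f n x) atTop (𝓝 (h x)) := by
    filter_upwards [hconv, h01] with x hcx hx
    obtain ⟨c, hc⟩ := hcx
    have hc0 : 0 ≤ c := ge_of_tendsto hc (Eventually.of_forall fun n => (hx n).1)
    have hofc : h' x = ENNReal.ofReal c :=
      ((ENNReal.continuous_ofReal.tendsto c).comp hc).liminf_eq
    have hhx : h x = c := by
      simp only [hhdef, hofc, ENNReal.toReal_ofReal hc0]
    rw [hhx]; exact hc
  haveI : SigmaFinite (μ.trim hinfle) := by
    haveI := isFiniteMeasure_trim (μ := μ) hinfle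
    infer_instance
  have hh_int : Integrable h μ := by
    refine (integrable_const (1:ℝ)).mono'
      ((hmeash.mono hinfle le_rfl).stronglyMeasurable.aestronglyMeasurable) ?_
    filter_upwards [hTend, h01] with x hx hb
    rw [Real.norm_eq_abs, abs_of_nonneg ENNReal.toReal_nonneg]
    exact le_of_tendsto hx (Eventually.of_forall fun n => (hb n).2)
  have heq : ∀ s : Set X, MeasurableSet[⨅ n, 𝒮 n] s → μ s < ⊤ →
      ∫ x in s, h x ∂μ = ∫ x in s, g x ∂μ := by
    intro s hs _
    have hsn : ∀ n, MeasurableSet[𝒮 n] s := fun n => MeasurableSpace.measurableSet_iInf.1 hs n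
    have hint : ∀ n, ∫ x in s, f n x ∂μ = ∫ x in s, g x ∂μ := fun n =>
      setIntegral_condExp (hle n) hg_int (hsn n)
    have hTlim : Tendsto (fun n => ∫ x in s, f n x ∂μ) atTop (𝓝 (∫ x in s, h x ∂μ)) := by
      refine tendsto_integral_of_dominated_convergence (fun _ => (1:ℝ))
        (fun n => ((stronglyMeasurable_condExp.mono (hle n)).aestronglyMeasurable).restrict)
        (integrable_const 1) ?_ ?_
      · intro n
        refine ae_restrict_of_ae ?_
        filter_upwards [h01] with x hx
        rw [Real.norm_eq_abs, abs_of_nonneg (hx n).1]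
        exact (hx n).2
      · exact ae_restrict_of_ae hTend
    have hce : (fun n => ∫ x in s, f n x ∂μ) = fun _ => ∫ x in s, g x ∂μ := funext hint
    rw [hce] at hTlim
    exact tendsto_nhds_unique hTlim tendsto_const_nhds
  have hcond : h =ᵐ[μ] μ[g|⨅ n, 𝒮 n] :=
    ae_eq_condExp_of_forall_setIntegral_eq hinfle hg_int
      (fun s _ _ => hh_int.integrableOn) heq
      (hmeash.stronglyMeasurable.aestronglyMeasurable)
  filter_upwards [hTend, hcond] with x hx heqx
  rw [← heqx]
  exact hx

theorem liminf_condMeasure_open_ge {X : Type*} [MetricSpace X] [PolishSpace X]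
    [mX : MeasurableSpace X] [BorelSpace X]
    (μ : Measure X) [IsProbabilityMeasure μ]
    (𝒮 : ℕ → MeasurableSpace X) (hle : ∀ n, 𝒮 n ≤ mX) (hanti : Antitone 𝒮)
    (μn : ℕ → X → Measure X) (μinf : X → Measure X)
    (hprobn : ∀ n, ∀ᵐ x ∂μ, IsProbabilityMeasure (μn n x))
    (hprobinf : ∀ᵐ x ∂μ, IsProbabilityMeasure (μinf x))
    (hdisn : ∀ (n : ℕ) (A : Set X), MeasurableSet A →
      (fun x => ((μn n x) A).toReal) =ᵐ[μ] μ[Set.indicator A (fun _ => (1:ℝ))|𝒮 n])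
    (hdisinf : ∀ (A : Set X), MeasurableSet A →
      (fun x => (μinf x A).toReal) =ᵐ[μ] μ[Set.indicator A (fun _ => (1:ℝ))|⨅ n, 𝒮 n]) :
    ∀ᵐ x ∂μ, ∀ U : Set X, IsOpen U →
      μinf x U ≤ Filter.liminf (fun n => μn n x U) atTop := by
  classical
  -- per-set statement
  have perset : ∀ V : Set X, MeasurableSet V →
      ∀ᵐ x ∂μ, μinf x V ≤ liminf (fun n => μn n x V) atTop := by
    intro V hV
    have hT := tendsto_condexp_iInf μ 𝒮 hle hanti hV
    have hn : ∀ᵐ x ∂μ, ∀ n,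
        (μn n x V).toReal = (μ[Set.indicator V (fun _ => (1:ℝ))|𝒮 n]) x := by
      rw [ae_all_iff]; exact fun n => hdisn n V hV
    have hprobn' : ∀ᵐ x ∂μ, ∀ n, IsProbabilityMeasure (μn n x) := by
      rw [ae_all_iff]; exact hprobn
    filter_upwards [hT, hn, hdisinf V hV, hprobn', hprobinf] with x hTx hnx hix hpn hpi
    have hTx' : Tendsto (fun n => (μn n x V).toReal) atTop (𝓝 ((μinf x V).toReal)) := by
      have h1 : (fun n => (μn n x V).toReal) =
          fun n => (μ[Set.indicator V (fun _ => (1:ℝ))|𝒮 n]) x := funext hnx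
      rw [h1, hix]
      exact hTx
    have hT2 : Tendsto (fun n => μn n x V) atTop (𝓝 (μinf x V)) := by
      have h2 : (fun n => μn n x V) = fun n => ENNReal.ofReal ((μn n x V).toReal) := by
        funext n
        haveI := hpn n
        exact (ENNReal.ofReal_toReal (measure_ne_top _ _)).symm
      have h3 : μinf x V = ENNReal.ofReal ((μinf x V).toReal) := by
        haveI := hpi
        exact (ENNReal.ofReal_toReal (measure_ne_top _ _)).symm
      rw [h2, h3]
      exact (ENNReal.continuous_ofReal.tendsto _).comp hTx'
    exact hT2.liminf_eq.symm.le
  -- countable basis enumeration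
  obtain ⟨e, he⟩ : ∃ e : ℕ → Set X,
      insert ∅ (TopologicalSpace.countableBasis X) = Set.range e :=
    Set.Countable.exists_eq_range ((TopologicalSpace.countable_countableBasis X).insert ∅)
      ⟨∅, Set.mem_insert _ _⟩
  have heopen : ∀ i, IsOpen (e i) := by
    intro i
    have : e i ∈ insert ∅ (TopologicalSpace.countableBasis X) := by
      rw [he]; exact Set.mem_range_self i
    rcases this with h | h
    · rw [h]; exact isOpen_empty
    · exact TopologicalSpace.isOpen_of_mem_countableBasis h
  have hall : ∀ᵐ x ∂μ, ∀ s : Finset ℕ,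
      μinf x (⋃ i ∈ s, e i) ≤ liminf (fun n => μn n x (⋃ i ∈ s, e i)) atTop := by
    rw [ae_all_iff]
    intro s
    exact perset _ ((isOpen_biUnion fun i _ => heopen i).measurableSet)
  filter_upwards [hall] with x hx U hU
  -- approximate U from inside by finite unions of basis elements
  set V : ℕ → Set X := fun k => ⋃ i ∈ (Finset.range k).filter (fun i => e i ⊆ U), e i with hVdef
  have hVU : ∀ k, V k ⊆ U := by
    intro k
    refine Set.iUnion₂_subset fun i hi => ?_
    exact (Finset.mem_filter.1 hi).2
  have hVmono : Monotone V := by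
    intro k l hkl
    refine Set.iUnion₂_subset fun i hi => ?_
    have hi' : i ∈ (Finset.range l).filter (fun i => e i ⊆ U) := by
      simp only [Finset.mem_filter, Finset.mem_range] at hi ⊢
      exact ⟨lt_of_lt_of_le hi.1 hkl, hi.2⟩
    exact Set.subset_iUnion₂ (s := fun i (_ : i ∈ (Finset.range l).filter (fun i => e i ⊆ U)) => e i) i hi'
  have hUV : U = ⋃ k, V k := by
    refine Set.Subset.antisymm ?_ (Set.iUnion_subset hVU)
    intro y hy
    obtain ⟨B, hB, hyB, hBU⟩ :=
      (TopologicalSpace.isBasis_countableBasis X).exists_subset_of_mem_open hy hU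
    have : B ∈ Set.range e := by rw [← he]; exact Set.mem_insert_of_mem _ hB
    obtain ⟨i, rfl⟩ := this
    refine Set.mem_iUnion.2 ⟨i + 1, Set.mem_iUnion₂.2 ⟨i, ?_, hyB⟩⟩
    simp only [Finset.mem_filter, Finset.mem_range]
    exact ⟨Nat.lt_succ_self i, hBU⟩
  have hsup : μinf x U = ⨆ k, μinf x (V k) := by
    rw [hUV]
    exact Directed.measure_iUnion (hVmono.directed_le)
  rw [hsup]
  refine iSup_le fun k => ?_
  refine le_trans (hx ((Finset.range k).filter (fun i => e i ⊆ U))) ?_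
  exact liminf_le_liminf (Eventually.of_forall fun n => measure_mono (hVU k))
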